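/- Let ã ~ N(a, λΣ) be a Gaussian vector in ℝ^A, let w₁,…,w_C ∈ ℝ^A, b₁,…,b_C ∈ ℝ, and fix a class index y ∈ {1,…,C}. Then E_ã[−log(exp(w_yᵀã + b_y) / Σ_{j=1}^C exp(w_jᵀã + b_j))] ≤ −log(exp(w_yᵀa + b_y) / Σ_{j=1}^C exp(w_jᵀa + b_j + (λ/2)(w_j − w_y)ᵀΣ(w_j − w_y))). -/

import Mathlib

open MeasureTheory ProbabilityTheory Real Matrix
open scoped NNReal


lemma exp_mul_gaussianPDFReal (μ : ℝ) (v : ℝ≥0) (hv : v ≠ 0) (x : ℝ) :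
    Real.exp x * gaussianPDFReal μ v x
      = Real.exp (μ + v / 2) * gaussianPDFReal (μ + v) v x := by
  have hv' : (0:ℝ) < v := by positivity
  unfold gaussianPDFReal
  rw [mul_left_comm, mul_left_comm (Real.exp _), ← Real.exp_add, ← Real.exp_add]
  congr 1
  field_simp
  ring

lemma integral_exp_gaussianReal (μ : ℝ) (v : ℝ≥0) :
    ∫ x, Real.exp x ∂(gaussianReal μ v) = Real.exp (μ + v / 2) := by
  by_cases hv : v = 0
  · simp [hv, gaussianReal_zero_var]
  · rw [gaussianReal_of_var_ne_zero _ hv]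
    have hpdf : (gaussianPDF μ v) = fun x => ((gaussianPDFReal μ v x).toNNReal : ENNReal) := rfl
    rw [hpdf, integral_withDensity_eq_integral_smul
      (measurable_gaussianPDFReal μ v).real_toNNReal]
    have : ∀ x, (Real.toNNReal (gaussianPDFReal μ v x)) • Real.exp x
        = Real.exp (μ + v / 2) * gaussianPDFReal (μ + v) v x := by
      intro x
      rw [NNReal.smul_def, smul_eq_mul, Real.coe_toNNReal _ (gaussianPDFReal_nonneg μ v x),
        mul_comm, exp_mul_gaussianPDFReal μ v hv x]
    simp_rw [this]
    rw [integral_const_mul, integral_gaussianPDFReal_eq_one _ hv, mul_one]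

lemma integrable_exp_gaussianReal (μ : ℝ) (v : ℝ≥0) :
    Integrable Real.exp (gaussianReal μ v) := by
  by_cases hv : v = 0
  · rw [hv, gaussianReal_zero_var]
    exact (integrable_const (Real.exp μ)).congr (ae_eq_dirac Real.exp).symm
  · rw [gaussianReal_of_var_ne_zero _ hv]
    have hpdf : (gaussianPDF μ v) = fun x => ((gaussianPDFReal μ v x).toNNReal : ENNReal) := rfl
    rw [hpdf, integrable_withDensity_iff_integrable_smul
      (measurable_gaussianPDFReal μ v).real_toNNReal]
    have : (fun x => (Real.toNNReal (gaussianPDFReal μ v x)) • Real.exp x)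
        = fun x => Real.exp (μ + v / 2) * gaussianPDFReal (μ + v) v x := by
      funext x
      rw [NNReal.smul_def, smul_eq_mul, Real.coe_toNNReal _ (gaussianPDFReal_nonneg μ v x),
        mul_comm, exp_mul_gaussianPDFReal μ v hv x]
    rw [this]
    exact (integrable_gaussianPDFReal _ _).const_mul _

lemma neg_log_softmax {C : ℕ} (t : Fin C → ℝ) (y : Fin C) :
    -Real.log (Real.exp (t y) / ∑ j, Real.exp (t j))
      = Real.log (∑ j, Real.exp (t j - t y)) := by
  have hS : 0 < ∑ j, Real.exp (t j) :=
    Finset.sum_pos (fun j _ => Real.exp_pos _) ⟨y, Finset.mem_univ y⟩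
  have h1 : ∑ j, Real.exp (t j - t y) = (∑ j, Real.exp (t j)) / Real.exp (t y) := by
    rw [Finset.sum_div]
    exact Finset.sum_congr rfl fun j _ => Real.exp_sub _ _
  rw [h1, Real.log_div (Real.exp_ne_zero _) (ne_of_gt hS), Real.log_exp,
    Real.log_div (ne_of_gt hS) (Real.exp_ne_zero _), Real.log_exp]
  ring

/-- A random vector `X : Ω → (Fin A → ℝ)` is multivariate Gaussian with mean `m` and
covariance matrix `S` iff every linear functional of it is a one-dimensional Gaussian
with the corresponding mean and variance (Cramér–Wold characterization). -/
def IsMvGaussian {Ω : Type*} [MeasurableSpace Ω] {A : ℕ} (P : Measure Ω)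
    (X : Ω → Fin A → ℝ) (m : Fin A → ℝ) (S : Matrix (Fin A) (Fin A) ℝ) : Prop :=
  ∀ v : Fin A → ℝ,
    P.map (fun ω => v ⬝ᵥ X ω) = gaussianReal (v ⬝ᵥ m) (Real.toNNReal (v ⬝ᵥ S.mulVec v))

set_option maxHeartbeats 1000000 in
/-- **Proposition 1 of the paper.** For `ã ~ N(a, λΣ)` and a softmax
classifier with weights `w_j` and biases `b_j`, the expected cross-entropy loss for the
true class `y` is upper bounded by the ISDA surrogate loss. -/
theorem isda_upper_bound {Ω : Type*} [MeasurableSpace Ω] {A C : ℕ}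
    (P : Measure Ω) [IsProbabilityMeasure P] (X : Ω → Fin A → ℝ) (a : Fin A → ℝ)
    (Sig : Matrix (Fin A) (Fin A) ℝ) (lam : ℝ) (hlam : 0 ≤ lam) (hSig : Sig.PosSemidef)
    (hX : IsMvGaussian P X a (lam • Sig))
    (w : Fin C → Fin A → ℝ) (b : Fin C → ℝ) (y : Fin C) :
    ∫ ω, -Real.log (Real.exp (w y ⬝ᵥ X ω + b y) / ∑ j, Real.exp (w j ⬝ᵥ X ω + b j)) ∂P ≤
      -Real.log (Real.exp (w y ⬝ᵥ a + b y) /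
        ∑ j, Real.exp (w j ⬝ᵥ a + b j +
          lam / 2 * ((w j - w y) ⬝ᵥ Sig.mulVec (w j - w y)))) := by
  -- notation
  set u : Fin C → Fin A → ℝ := fun j => w j - w y with hu
  have hZm : ∀ v : Fin A → ℝ, AEMeasurable (fun ω => v ⬝ᵥ X ω) P := by
    intro v
    by_contra h
    have h0 := hX v
    rw [Measure.map_of_not_aemeasurable h] at h0
    have h1 : (gaussianReal (v ⬝ᵥ a) (Real.toNNReal (v ⬝ᵥ (lam • Sig).mulVec v)))
        Set.univ = 1 := measure_univ
    rw [← h0] at h1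
    simp at h1
  -- variance identity
  have hvar : ∀ j, ((Real.toNNReal (u j ⬝ᵥ (lam • Sig).mulVec (u j))) : ℝ)
      = lam * (u j ⬝ᵥ Sig.mulVec (u j)) := by
    intro j
    have hq : 0 ≤ u j ⬝ᵥ Sig.mulVec (u j) := by
      have := hSig.dotProduct_mulVec_nonneg (u j)
      simpa using this
    rw [smul_mulVec, dotProduct_smul, smul_eq_mul,
      Real.coe_toNNReal _ (mul_nonneg hlam hq)]
  -- the function g and its mean m
  set g : Ω → ℝ := fun ω => ∑ j, Real.exp (u j ⬝ᵥ X ω + (b j - b y)) with hg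
  set m : ℝ := ∑ j, Real.exp (u j ⬝ᵥ a + (b j - b y)
      + lam / 2 * (u j ⬝ᵥ Sig.mulVec (u j))) with hm
  have hexp_sm : ∀ j : Fin C, AEStronglyMeasurable (fun x : ℝ => Real.exp x)
      (P.map fun ω => u j ⬝ᵥ X ω) := fun j => Real.continuous_exp.aestronglyMeasurable
  -- per-term integrability and integrals
  have hint : ∀ j : Fin C, Integrable (fun ω => Real.exp (u j ⬝ᵥ X ω + (b j - b y))) P := by
    intro j
    have h1 : Integrable ((fun x => Real.exp x) ∘ (fun ω => u j ⬝ᵥ X ω)) P := by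
      rw [← integrable_map_measure (hexp_sm j) (hZm (u j)), hX (u j)]
      exact integrable_exp_gaussianReal _ _
    have : (fun ω => Real.exp (u j ⬝ᵥ X ω + (b j - b y)))
        = fun ω => Real.exp (b j - b y) * Real.exp (u j ⬝ᵥ X ω) := by
      funext ω; rw [Real.exp_add]; ring
    rw [this]
    exact h1.const_mul _
  have hintgl : ∀ j : Fin C, ∫ ω, Real.exp (u j ⬝ᵥ X ω + (b j - b y)) ∂P
      = Real.exp (u j ⬝ᵥ a + (b j - b y) + lam / 2 * (u j ⬝ᵥ Sig.mulVec (u j))) := by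
    intro j
    have h1 : ∫ ω, Real.exp (u j ⬝ᵥ X ω) ∂P
        = Real.exp (u j ⬝ᵥ a + ((Real.toNNReal (u j ⬝ᵥ (lam • Sig).mulVec (u j))) : ℝ) / 2) := by
      rw [← integral_exp_gaussianReal, ← hX (u j), integral_map (hZm (u j)) (hexp_sm j)]
    calc ∫ ω, Real.exp (u j ⬝ᵥ X ω + (b j - b y)) ∂P
        = ∫ ω, Real.exp (b j - b y) * Real.exp (u j ⬝ᵥ X ω) ∂P := by
          congr 1; funext ω; rw [Real.exp_add]; ring
      _ = Real.exp (b j - b y) * ∫ ω, Real.exp (u j ⬝ᵥ X ω) ∂P := integral_const_mul _ _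
      _ = _ := by rw [h1, hvar j, ← Real.exp_add]; congr 1; ring
  have hg_int : Integrable g P := integrable_finset_sum _ fun j _ => hint j
  have hg_intgl : ∫ ω, g ω ∂P = m := by
    rw [hg, hm, integral_finset_sum _ fun j _ => hint j]
    exact Finset.sum_congr rfl fun j _ => hintgl j
  -- positivity facts
  have hgpos : ∀ ω, 0 < g ω :=
    fun ω => Finset.sum_pos (fun j _ => Real.exp_pos _) ⟨y, Finset.mem_univ y⟩
  have hg1 : ∀ ω, 1 ≤ g ω := by
    intro ω
    have hz : u y = 0 := sub_self _
    have h0 : u y ⬝ᵥ X ω + (b y - b y) = 0 := by rw [hz, zero_dotProduct]; ring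
    calc (1:ℝ) = Real.exp (u y ⬝ᵥ X ω + (b y - b y)) := by rw [h0, Real.exp_zero]
      _ ≤ g ω := Finset.single_le_sum
        (f := fun j => Real.exp (u j ⬝ᵥ X ω + (b j - b y)))
        (fun j _ => (Real.exp_pos _).le) (Finset.mem_univ y)
  have hmpos : 0 < m :=
    Finset.sum_pos (fun j _ => Real.exp_pos _) ⟨y, Finset.mem_univ y⟩
  -- rewrite LHS
  have hLHS : ∀ ω, -Real.log (Real.exp (w y ⬝ᵥ X ω + b y) / ∑ j, Real.exp (w j ⬝ᵥ X ω + b j))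
      = Real.log (g ω) := by
    intro ω
    rw [neg_log_softmax (fun j => w j ⬝ᵥ X ω + b j) y]
    congr 1
    refine Finset.sum_congr rfl fun j _ => ?_
    rw [hu]
    simp only [sub_dotProduct]
    ring_nf
  -- rewrite RHS
  have hRHS : -Real.log (Real.exp (w y ⬝ᵥ a + b y) /
      ∑ j, Real.exp (w j ⬝ᵥ a + b j + lam / 2 * ((w j - w y) ⬝ᵥ Sig.mulVec (w j - w y))))
      = Real.log m := by
    have hz : (w y - w y) ⬝ᵥ Sig.mulVec (w y - w y) = 0 := by
      rw [sub_self, zero_dotProduct]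
    have hy0 : w y ⬝ᵥ a + b y
        = w y ⬝ᵥ a + b y + lam / 2 * ((w y - w y) ⬝ᵥ Sig.mulVec (w y - w y)) := by
      rw [hz]; ring
    rw [hy0, neg_log_softmax
      (fun j => w j ⬝ᵥ a + b j + lam / 2 * ((w j - w y) ⬝ᵥ Sig.mulVec (w j - w y))) y]
    congr 1
    refine Finset.sum_congr rfl fun j _ => ?_
    have hz2 : (w y - w y) ⬝ᵥ Sig.mulVec (w y - w y) = 0 := by
      rw [sub_self, zero_dotProduct]
    simp only [hu, hz2, sub_dotProduct, mul_zero, add_zero]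
    congr 1
    ring
  -- pointwise bound
  have hbound : ∀ ω, Real.log (g ω) ≤ g ω / m + (Real.log m - 1) := by
    intro ω
    have h1 : Real.log (g ω / m) ≤ g ω / m - 1 :=
      Real.log_le_sub_one_of_pos (div_pos (hgpos ω) hmpos)
    rw [Real.log_div (ne_of_gt (hgpos ω)) (ne_of_gt hmpos)] at h1
    linarith
  -- integrability of log g
  have hgm : AEMeasurable g P := by
    refine Finset.aemeasurable_fun_sum _ fun j _ => ?_
    exact Real.measurable_exp.comp_aemeasurable ((hZm (u j)).add_const _)
  have hB_int : Integrable (fun ω => g ω / m + (Real.log m - 1)) P :=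
    (hg_int.div_const m).add (integrable_const _)
  have hlog_int : Integrable (fun ω => Real.log (g ω)) P := by
    refine Integrable.mono' hB_int
      (Real.measurable_log.comp_aemeasurable hgm).aestronglyMeasurable
      (Filter.Eventually.of_forall fun ω => ?_)
    rw [Real.norm_eq_abs, abs_of_nonneg (Real.log_nonneg (hg1 ω))]
    exact hbound ω
  -- conclude
  calc ∫ ω, -Real.log (Real.exp (w y ⬝ᵥ X ω + b y) / ∑ j, Real.exp (w j ⬝ᵥ X ω + b j)) ∂P
      = ∫ ω, Real.log (g ω) ∂P := by congr 1; funext ω; exact hLHS ω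
    _ ≤ ∫ ω, (g ω / m + (Real.log m - 1)) ∂P := integral_mono hlog_int hB_int hbound
    _ = Real.log m := by
        rw [integral_add (hg_int.div_const m) (integrable_const _), integral_const,
          probReal_univ, integral_div, hg_intgl]
        simp
        field_simp
        ring
    _ = _ := hRHS.symm
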